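/- Let 𝓗 be a complex Hilbert space, H : ℝ → (𝓗 →L[ℂ] 𝓗) a twice differentiable family of bounded self-adjoint operators, E : ℝ → ℝ twice differentiable, and χ : ℝ → 𝓗 twice differentiable with ‖χ(k)‖ = 1 and H(k)χ(k) = E(k)·χ(k) for every k ∈ ℝ. Then for every k ∈ ℝ: E''(k) = ⟨χ(k), H''(k) χ(k)⟩ + 2 Re ⟨(H'(k) − E'(k)·Id) χ(k), χ'(k)⟩. -/

import Mathlib

noncomputable section

/-- second-derivative formula for the eigenvalue of a twice
differentiable family of bounded self-adjoint operators:
`E''(k) = ⟨χ(k), H''(k) χ(k)⟩ + 2 Re ⟨(H'(k) - E'(k)·Id) χ(k), χ'(k)⟩`. -/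
theorem second_deriv_eigenvalue {𝓗 : Type*} [NormedAddCommGroup 𝓗]
    [InnerProductSpace ℂ 𝓗] [CompleteSpace 𝓗]
    (H H' H'' : ℝ → 𝓗 →L[ℂ] 𝓗) (E E' E'' : ℝ → ℝ) (χ χ' χ'' : ℝ → 𝓗)
    (hHsa : ∀ k, IsSelfAdjoint (H k))
    (hH : ∀ k, HasDerivAt H (H' k) k) (hH' : ∀ k, HasDerivAt H' (H'' k) k)
    (hE : ∀ k, HasDerivAt E (E' k) k) (hE' : ∀ k, HasDerivAt E' (E'' k) k)
    (hχ : ∀ k, HasDerivAt χ (χ' k) k) (hχ' : ∀ k, HasDerivAt χ' (χ'' k) k)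
    (hnorm : ∀ k, ‖χ k‖ = 1)
    (heig : ∀ k, H k (χ k) = (E k : ℂ) • χ k) :
    ∀ k : ℝ,
      (E'' k : ℂ) = (inner ℂ (χ k) (H'' k (χ k)) : ℂ)
        + 2 * (((inner ℂ ((H' k - (E' k : ℂ) • (1 : 𝓗 →L[ℂ] 𝓗)) (χ k)) (χ' k) : ℂ).re : ℂ)) := by
  classical
  set L : (𝓗 →L[ℂ] 𝓗) →L[ℝ] (𝓗 →L[ℝ] 𝓗) :=
    ContinuousLinearMap.restrictScalarsL ℂ 𝓗 𝓗 ℝ ℝ with hL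
  -- derivative of k ↦ A k x for a differentiable family A
  have happ : ∀ (A A' : ℝ → 𝓗 →L[ℂ] 𝓗), (∀ k, HasDerivAt A (A' k) k) →
      ∀ (x : 𝓗) (k : ℝ), HasDerivAt (fun k => A k x) (A' k x) k := by
    intro A A' hA x k
    have h1 : HasDerivAt (fun k => L (A k)) (L (A' k)) k :=
      L.hasFDerivAt.comp_hasDerivAt k (hA k)
    have h2 := h1.clm_apply (hasDerivAt_const k x)
    simpa [hL] using h2
  -- derivative of k ↦ A k (χ k)
  have happχ : ∀ (A A' : ℝ → 𝓗 →L[ℂ] 𝓗), (∀ k, HasDerivAt A (A' k) k) →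
      ∀ k : ℝ, HasDerivAt (fun k => A k (χ k)) (A' k (χ k) + A k (χ' k)) k := by
    intro A A' hA k
    have h1 : HasDerivAt (fun k => L (A k)) (L (A' k)) k :=
      L.hasFDerivAt.comp_hasDerivAt k (hA k)
    have h2 := h1.clm_apply (hχ k)
    simpa [hL] using h2
  -- symmetry of H'
  have hH'sym : ∀ (k : ℝ) (x y : 𝓗),
      (inner ℂ (H' k x) y : ℂ) = inner ℂ x (H' k y) := by
    intro k x y
    have hfun : (fun k => (inner ℂ (H k x) y : ℂ) - inner ℂ x (H k y)) = fun _ => (0 : ℂ) := by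
      funext t
      rw [sub_eq_zero]
      exact (hHsa t).isSymmetric x y
    have hder : HasDerivAt (fun k => (inner ℂ (H k x) y : ℂ) - inner ℂ x (H k y))
        ((inner ℂ (H' k x) y : ℂ) - inner ℂ x (H' k y)) k := by
      have h1 := ((happ H H' hH x k).inner ℂ (hasDerivAt_const k y))
      have h2 := ((hasDerivAt_const k x).inner ℂ (happ H H' hH y k))
      have h3 := h1.sub h2
      simp only [inner_zero_right, inner_zero_left, zero_add, add_zero] at h3
      exact h3
    rw [hfun] at hder
    exact sub_eq_zero.mp (hder.unique (hasDerivAt_const k 0))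
  -- ⟪χ, χ'⟫ + ⟪χ', χ⟫ = 0
  have hcc : ∀ k : ℝ, (inner ℂ (χ k) (χ' k) : ℂ) + inner ℂ (χ' k) (χ k) = 0 := by
    intro k
    have hfun : (fun k => (inner ℂ (χ k) (χ k) : ℂ)) = fun _ => (1 : ℂ) := by
      funext t
      rw [inner_self_eq_norm_sq_to_K, hnorm t]
      norm_num
    have hder : HasDerivAt (fun k => (inner ℂ (χ k) (χ k) : ℂ))
        ((inner ℂ (χ k) (χ' k) : ℂ) + inner ℂ (χ' k) (χ k)) k := (hχ k).inner ℂ (hχ k)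
    rw [hfun] at hder
    exact hder.unique (hasDerivAt_const k 1)
  have hRe : ∀ k : ℝ, (inner ℂ (χ k) (χ' k) : ℂ).re = 0 := by
    intro k
    have h2 : (inner ℂ (χ k) (χ' k) : ℂ) + (starRingEnd ℂ) (inner ℂ (χ k) (χ' k)) = 0 := by
      rw [inner_conj_symm]
      exact hcc k
    have h3 := congrArg Complex.re h2
    simp only [Complex.add_re, Complex.conj_re, Complex.zero_re] at h3
    linarith
  -- first derivative: ⟪χ, H' χ⟫ = E'
  have hFH : ∀ k : ℝ, (inner ℂ (χ k) (H' k (χ k)) : ℂ) = (E' k : ℂ) := by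
    intro k
    have hfun : (fun k => (inner ℂ (χ k) (H k (χ k)) : ℂ)) = fun k => ((E k : ℂ)) := by
      funext t
      rw [heig t, inner_smul_right, inner_self_eq_norm_sq_to_K, hnorm t]
      norm_num
    have hder : HasDerivAt (fun k => (inner ℂ (χ k) (H k (χ k)) : ℂ))
        ((inner ℂ (χ k) (H' k (χ k) + H k (χ' k)) : ℂ) + inner ℂ (χ' k) (H k (χ k))) k :=
      (hχ k).inner ℂ (happχ H H' hH k)
    rw [hfun] at hder
    have hE₂ : HasDerivAt (fun k => ((E k : ℂ))) ((E' k : ℂ)) k := (hE k).ofReal_comp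
    have hsym : (inner ℂ (H k (χ k)) (χ' k) : ℂ) = inner ℂ (χ k) (H k (χ' k)) :=
      (hHsa k).isSymmetric (χ k) (χ' k)
    have e1 : (inner ℂ (χ k) (H k (χ' k)) : ℂ) = (E k : ℂ) * inner ℂ (χ k) (χ' k) := by
      rw [← hsym, heig k, inner_smul_left, Complex.conj_ofReal]
    have e2 : (inner ℂ (χ' k) (H k (χ k)) : ℂ) = (E k : ℂ) * inner ℂ (χ' k) (χ k) := by
      rw [heig k, inner_smul_right]
    have huniq := hder.unique hE₂
    rw [inner_add_right] at huniq
    linear_combination huniq - e1 - e2 - (E k : ℂ) * hcc k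
  -- second derivative
  intro k
  have hder : HasDerivAt (fun k => (inner ℂ (χ k) (H' k (χ k)) : ℂ))
      ((inner ℂ (χ k) (H'' k (χ k) + H' k (χ' k)) : ℂ) + inner ℂ (χ' k) (H' k (χ k))) k :=
    (hχ k).inner ℂ (happχ H' H'' hH' k)
  have hfun : (fun k => (inner ℂ (χ k) (H' k (χ k)) : ℂ)) = fun k => ((E' k : ℂ)) :=
    funext hFH
  rw [hfun] at hder
  have hE₂ : HasDerivAt (fun k => ((E' k : ℂ))) ((E'' k : ℂ)) k := (hE' k).ofReal_comp
  have huniq := (hder.unique hE₂).symm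
  rw [inner_add_right, ← hH'sym k (χ k) (χ' k)] at huniq
  -- huniq : E'' = ⟪χ, H''χ⟫ + ⟪H'χ, χ'⟫ + ⟪χ', H'χ⟫
  have hconj : (inner ℂ (χ' k) (H' k (χ k)) : ℂ) =
      (starRingEnd ℂ) (inner ℂ (H' k (χ k)) (χ' k)) := (inner_conj_symm _ _).symm
  rw [hconj] at huniq
  -- now compute the RHS of the goal
  have hsub : (inner ℂ ((H' k - (E' k : ℂ) • (1 : 𝓗 →L[ℂ] 𝓗)) (χ k)) (χ' k) : ℂ)
      = inner ℂ (H' k (χ k)) (χ' k) - (E' k : ℂ) * inner ℂ (χ k) (χ' k) := by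
    rw [ContinuousLinearMap.sub_apply, ContinuousLinearMap.smul_apply,
      ContinuousLinearMap.one_apply, inner_sub_left, inner_smul_left, Complex.conj_ofReal]
  have hre : ((inner ℂ ((H' k - (E' k : ℂ) • (1 : 𝓗 →L[ℂ] 𝓗)) (χ k)) (χ' k) : ℂ)).re
      = ((inner ℂ (H' k (χ k)) (χ' k) : ℂ)).re := by
    rw [hsub]
    simp [Complex.sub_re, Complex.mul_re, hRe k]
  rw [hre, huniq]
  have haddconj : (inner ℂ (H' k (χ k)) (χ' k) : ℂ)
      + (starRingEnd ℂ) (inner ℂ (H' k (χ k)) (χ' k))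
      = 2 * (((inner ℂ (H' k (χ k)) (χ' k) : ℂ)).re : ℂ) := by
    rw [Complex.add_conj]
    norm_num
  linear_combination haddconj
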